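/- Let κ be a cardinal with uncountable cofinality, X ⊆ [ω]^ω such that X ∪ Fin is κ-concentrated on Fin, and let (𝒰_n)_{n∈ω} be a sequence of open covers of X ∪ Fin (as a subspace of P(ω)). Then there exist a set A ⊆ X with |A| < κ and, for every n, a member U_n ∈ 𝒰_n such that for all x ∈ (X ∖ A) ∪ Fin the set {n : x ∈ U_n} is infinite. -/

import Mathlib

open Set Cardinal

/-- The finite subsets of ω, as a subset of Cantor space `ℕ → Bool`. -/
def FinS : Set (ℕ → Bool) := {x | {n | x n = true}.Finite}

/-- if `X ∪ Fin` is κ-concentrated on `Fin` (κ of uncountable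
cofinality) and `(𝒰_n)` is a sequence of open covers of `X ∪ Fin`, then there are
`A ⊆ X` with `|A| < κ` and selections `U_n ∈ 𝒰_n` such that every
`x ∈ (X ∖ A) ∪ Fin` belongs to infinitely many `U_n`. -/
theorem stmt7 (κ : Cardinal) (hκ : Cardinal.aleph0 < κ.ord.cof)
    (X : Set (ℕ → Bool)) (hX : ∀ x ∈ X, {n | x n = true}.Infinite)
    (hconc : κ ≤ Cardinal.mk ↥(X ∪ FinS) ∧
      ∀ U : Set (ℕ → Bool), IsOpen U → FinS ⊆ U →
        Cardinal.mk ↥((X ∪ FinS) \ U) < κ)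
    (𝒰 : ℕ → Set (Set (ℕ → Bool)))
    (hcov : ∀ n, (∀ V ∈ 𝒰 n, IsOpen V) ∧ X ∪ FinS ⊆ ⋃₀ 𝒰 n) :
    ∃ A ⊆ X, Cardinal.mk A < κ ∧
      ∃ U : ℕ → Set (ℕ → Bool), (∀ n, U n ∈ 𝒰 n) ∧
        ∀ x ∈ (X \ A) ∪ FinS, {n | x ∈ U n}.Infinite := by
  obtain ⟨-, hconc⟩ := hconc
  -- FinS is countable
  have hFc : FinS.Countable := by
    apply Set.Countable.mono _
      (Set.countable_range (fun s : Finset ℕ => fun n => decide (n ∈ s)))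
    intro x hx
    refine ⟨hx.toFinset, ?_⟩
    funext n
    by_cases h : x n = true <;> simp [Set.Finite.mem_toFinset, h]
    · exact (Set.Finite.mem_toFinset (hs := hx)).2 h
    · exact fun hm => h ((Set.Finite.mem_toFinset (hs := hx)).1 hm)
  have hFne : FinS.Nonempty := ⟨fun _ => false, by simp [FinS]⟩
  obtain ⟨e, he⟩ := hFc.exists_eq_range hFne
  have heF : ∀ k, e k ∈ FinS := fun k => he ▸ ⟨k, rfl⟩
  -- choose a member of 𝒰 n containing each element of FinS
  have hsel : ∀ n k, ∃ V ∈ 𝒰 n, e k ∈ V := by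
    intro n k
    obtain ⟨V, hV, hxV⟩ := (hcov n).2 (Or.inr (heF k))
    exact ⟨V, hV, hxV⟩
  choose V hV1 hV2 using hsel
  set U : ℕ → Set (ℕ → Bool) := fun n => V n (Nat.unpair n).1 with hU
  have hUmem : ∀ n, U n ∈ 𝒰 n := fun n => hV1 n _
  -- every element of FinS is in infinitely many U n
  have hFin : ∀ d ∈ FinS, {n | d ∈ U n}.Infinite := by
    intro d hd
    rw [he] at hd
    obtain ⟨k, rfl⟩ := hd
    apply Set.infinite_of_injective_forall_mem (f := fun j => Nat.pair k j)
    · intro a b hab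
      have := congrArg Nat.unpair hab
      simpa [Nat.unpair_pair] using this
    · intro j
      simp only [Set.mem_setOf_eq, hU, Nat.unpair_pair]
      exact hV2 _ _
  -- the open sets W m
  set W : ℕ → Set (ℕ → Bool) := fun m => ⋃ n, ⋃ (_ : m ≤ n), U n with hW
  have hWopen : ∀ m, IsOpen (W m) :=
    fun m => isOpen_iUnion fun n => isOpen_iUnion fun _ => (hcov n).1 _ (hUmem n)
  have hWF : ∀ m, FinS ⊆ W m := by
    intro m d hd
    have h1 := hFin d hd
    obtain ⟨n, hn, hmn⟩ := h1.exists_gt m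
    exact Set.mem_iUnion.2 ⟨n, Set.mem_iUnion.2 ⟨le_of_lt hmn, hn⟩⟩
  set S : ℕ → Set (ℕ → Bool) := fun m => (X ∪ FinS) \ W m with hS
  have hSlt : ∀ m, Cardinal.mk (S m) < κ := fun m => hconc _ (hWopen m) (hWF m)
  set A : Set (ℕ → Bool) := X ∩ ⋃ m, S m with hA
  have hκinf : Cardinal.aleph0 ≤ κ := le_trans hκ.le (Ordinal.cof_ord_le κ)
  refine ⟨A, Set.inter_subset_left, ?_, U, hUmem, ?_⟩
  · -- cardinality bound
    have h1 : Cardinal.mk A ≤ Cardinal.mk (⋃ m, S m) :=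
      Cardinal.mk_le_mk_of_subset Set.inter_subset_right
    have h2 : Cardinal.mk (⋃ m, S m) ≤ Cardinal.sum fun m => Cardinal.mk (S m) :=
      Cardinal.mk_iUnion_le_sum_mk
    have h3 : Cardinal.sum (fun m => Cardinal.mk (S m)) ≤
        Cardinal.aleph0 * ⨆ m, Cardinal.mk (S m) := by
      simpa using Cardinal.sum_le_mk_mul_iSup (fun m => Cardinal.mk (S m))
    have h4 : (⨆ m, Cardinal.mk (S m)) < κ := by
      apply Ordinal.iSup_lt _ hSlt
      simpa using hκ
    have h5 : Cardinal.aleph0 * (⨆ m, Cardinal.mk (S m)) < κ :=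
      Cardinal.mul_lt_of_lt hκinf (lt_of_lt_of_le hκ (Ordinal.cof_ord_le κ)) h4
    exact lt_of_le_of_lt (h1.trans (h2.trans h3)) h5
  · -- main property
    rintro x (⟨hxX, hxA⟩ | hxF)
    · apply Set.infinite_of_forall_exists_gt
      intro a
      have hxW : x ∈ W (a + 1) := by
        by_contra hxW
        exact hxA ⟨hxX, Set.mem_iUnion.2 ⟨a + 1, Or.inl hxX, hxW⟩⟩
      obtain ⟨n, hn⟩ := Set.mem_iUnion.1 hxW
      obtain ⟨hmn, hxn⟩ := Set.mem_iUnion.1 hn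
      exact ⟨n, hxn, lt_of_lt_of_le (Nat.lt_succ_self a) hmn⟩
    · exact hFin x hxF
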